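/- Let β : [0,T] → ℝ be continuous, nonnegative with β ≥ 1, and suppose there is c > 0 such that for all t ∈ [0,T], β(t) ≤ c + c∫₀ᵗ β(s)^{1/2} ds + β(t)^{1/2}(c + c∫₀ᵗ β(s)^{1/2} ds). Suppose moreover β is nondecreasing. Then there exists a continuous function a : [0,∞) → [0,∞), depending only on c, such that β(t) ≤ a(t) for all t ∈ [0,T]. -/

import Mathlib

open Set Real intervalIntegral

/-- Nonlinear Gronwall-type lemma closing the energy estimate: if `β ≥ 1` is
continuous, nondecreasing and satisfies
`β(t) ≤ c + c∫₀ᵗ √β + √(β t) (c + c∫₀ᵗ √β)`, then `β` is bounded by a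
continuous function depending only on `c`. -/
theorem nonlinear_gronwall :
    ∀ c : ℝ, 0 < c → ∃ a : ℝ → ℝ, Continuous a ∧ (∀ t, 0 ≤ a t) ∧
      ∀ T : ℝ, 0 ≤ T → ∀ β : ℝ → ℝ,
        ContinuousOn β (Set.Icc 0 T) →
        (∀ t ∈ Set.Icc (0 : ℝ) T, 1 ≤ β t) →
        MonotoneOn β (Set.Icc 0 T) →
        (∀ t ∈ Set.Icc (0 : ℝ) T,
          β t ≤ c + c * (∫ s in (0 : ℝ)..t, Real.sqrt (β s)) +
            Real.sqrt (β t) * (c + c * ∫ s in (0 : ℝ)..t, Real.sqrt (β s))) →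
        ∀ t ∈ Set.Icc (0 : ℝ) T, β t ≤ a t := by
  intro c hc
  set C : ℝ := 2 * c with hC
  have hCpos : 0 < C := by positivity
  refine ⟨fun t => (C * Real.exp (C * t)) ^ 2, by continuity, fun t => by positivity,
    ?_⟩
  intro T hT β hβc hβ1 hβmono hβineq
  -- the continuous extension of √β to all of ℝ
  set p : ℝ → ℝ := fun s => max 0 (min s T) with hp
  have hpcont : Continuous p := continuous_const.max (continuous_id.min continuous_const)
  have hpmaps : ∀ s, p s ∈ Icc (0 : ℝ) T := fun s =>
    ⟨le_max_left _ _, max_le (by linarith [min_le_right s T]) (min_le_right s T)⟩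
  have hpeq : ∀ s ∈ Icc (0 : ℝ) T, p s = s := by
    intro s hs
    simp [hp, min_eq_left hs.2, max_eq_right hs.1]
  set g : ℝ → ℝ := fun s => Real.sqrt (β (p s)) with hg
  have hgcont : Continuous g := by
    exact Real.continuous_sqrt.comp ((hβc.comp_continuous hpcont hpmaps))
  have hgnonneg : ∀ s, 0 ≤ g s := fun s => Real.sqrt_nonneg _
  have hgeq : ∀ s ∈ Icc (0 : ℝ) T, g s = Real.sqrt (β s) := fun s hs => by
    simp [hg, hpeq s hs]
  -- the integral in the hypothesis agrees with the integral of g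
  have hint : ∀ t ∈ Icc (0 : ℝ) T,
      (∫ s in (0 : ℝ)..t, Real.sqrt (β s)) = ∫ s in (0 : ℝ)..t, g s := by
    intro t ht
    refine intervalIntegral.integral_congr (fun s hs => ?_)
    rw [Set.uIcc_of_le ht.1] at hs
    exact (hgeq s ⟨hs.1, hs.2.trans ht.2⟩).symm
  set u : ℝ → ℝ := fun t => C + C * ∫ s in (0 : ℝ)..t, g s with hu
  have huderiv : ∀ x, HasDerivAt u (C * g x) x := by
    intro x
    have h1 : HasDerivAt (fun t => ∫ s in (0 : ℝ)..t, g s) (g x) x :=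
      intervalIntegral.integral_hasDerivAt_right (hgcont.intervalIntegrable _ _)
        (hgcont.stronglyMeasurable.stronglyMeasurableAtFilter) hgcont.continuousAt
    exact (h1.const_mul C).const_add C
  have hunonneg : ∀ t, 0 ≤ t → 0 ≤ u t := by
    intro t ht
    have : 0 ≤ ∫ s in (0 : ℝ)..t, g s :=
      intervalIntegral.integral_nonneg ht fun s _ => hgnonneg s
    have := hCpos.le
    simp only [hu]; nlinarith
  -- key pointwise bound: √(β t) ≤ u t on [0,T]
  have hkey : ∀ t ∈ Icc (0 : ℝ) T, Real.sqrt (β t) ≤ u t := by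
    intro t ht
    have h1 : (1 : ℝ) ≤ Real.sqrt (β t) := by
      rw [show (1 : ℝ) = Real.sqrt 1 by simp]
      exact Real.sqrt_le_sqrt (hβ1 t ht)
    have hA : 0 ≤ c + c * ∫ s in (0 : ℝ)..t, Real.sqrt (β s) := by
      have : 0 ≤ ∫ s in (0 : ℝ)..t, Real.sqrt (β s) :=
        intervalIntegral.integral_nonneg ht.1 fun s _ => Real.sqrt_nonneg _
      nlinarith
    have hsq : Real.sqrt (β t) * Real.sqrt (β t) = β t :=
      Real.mul_self_sqrt (by linarith [hβ1 t ht])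
    have hβt := hβineq t ht
    -- β t ≤ 2 * √(β t) * A, hence √(β t) ≤ 2 A = u t
    have h2 : Real.sqrt (β t) * Real.sqrt (β t) ≤
        Real.sqrt (β t) * (2 * (c + c * ∫ s in (0 : ℝ)..t, Real.sqrt (β s))) := by
      rw [hsq]; nlinarith
    have h3 : Real.sqrt (β t) ≤ 2 * (c + c * ∫ s in (0 : ℝ)..t, Real.sqrt (β s)) :=
      (mul_le_mul_iff_right₀ (by linarith : (0:ℝ) < Real.sqrt (β t))).mp h2
    calc Real.sqrt (β t) ≤ 2 * (c + c * ∫ s in (0 : ℝ)..t, Real.sqrt (β s)) := h3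
      _ = u t := by rw [hu, hint t ht, hC]; ring
  -- Gronwall for u
  have hgle : ∀ x ∈ Ico (0 : ℝ) T, g x ≤ u x := fun x hx => by
    rw [hgeq x ⟨hx.1, hx.2.le⟩]; exact hkey x ⟨hx.1, hx.2.le⟩
  have hgron : ∀ x ∈ Icc (0 : ℝ) T, ‖u x‖ ≤ gronwallBound C C 0 (x - 0) := by
    refine norm_le_gronwallBound_of_norm_deriv_right_le
      (fun x _ => (huderiv x).continuousAt.continuousWithinAt)
      (fun x _ => (huderiv x).hasDerivWithinAt) ?_ ?_
    · have : u 0 = C := by simp [hu]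
      rw [this, Real.norm_of_nonneg hCpos.le]
    · intro x hx
      rw [Real.norm_of_nonneg (by positivity), Real.norm_of_nonneg (hunonneg x hx.1)]
      have := hgle x hx
      nlinarith [hgnonneg x, hunonneg x hx.1]
  -- conclude
  intro t ht
  have h1 : Real.sqrt (β t) ≤ C * Real.exp (C * t) := by
    have h2 := hgron t ht
    rw [Real.norm_of_nonneg (hunonneg t ht.1), sub_zero, gronwallBound_ε0] at h2
    exact (hkey t ht).trans h2
  have hsq : Real.sqrt (β t) * Real.sqrt (β t) = β t :=
    Real.mul_self_sqrt (by linarith [hβ1 t ht])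
  calc β t = Real.sqrt (β t) * Real.sqrt (β t) := hsq.symm
    _ ≤ (C * Real.exp (C * t)) * (C * Real.exp (C * t)) :=
        mul_self_le_mul_self (Real.sqrt_nonneg _) h1
    _ = (C * Real.exp (C * t)) ^ 2 := (sq _).symm
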